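/- Explicit eigenvalue in the constant-coefficients case. Let τ₀, β₀ > 0, μ₀ ∈ ℝ, V > 0, and suppose U is a decaying eigenfunction with eigenvalue Λ for the parameter V, with constant polymerization rate τ(x) ≡ τ₀, constant degradation rate μ(x) ≡ μ₀, and linear fragmentation rate β(x) = β₀·x. If ∫₀^∞ U(x)dx > 0, then the mean polymer size satisfies (∫₀^∞ x·U(x)dx)/(∫₀^∞ U(x)dx) = √(τ₀V/β₀), and the eigenvalue is Λ = μ₀ − √(τ₀·β₀·V). -/

import Mathlib

open MeasureTheory Set Filter Topology

lemma ftc_Ioi {f f' : ℝ → ℝ} {a b : ℝ}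
    (hderiv : ∀ x ∈ Ioi (0:ℝ), HasDerivAt f (f' x) x)
    (hint : IntegrableOn f' (Ioi 0))
    (h0 : Tendsto f (𝓝[>] (0:ℝ)) (𝓝 a))
    (htop : Tendsto f atTop (𝓝 b)) :
    ∫ x in Ioi (0:ℝ), f' x = b - a := by
  set s : ℕ → Set ℝ := fun n => Ioi ((n:ℝ)+1)⁻¹ with hs
  have hpos : ∀ n : ℕ, (0:ℝ) < ((n:ℝ)+1)⁻¹ := fun n => by positivity
  have hunion : (⋃ n, s n) = Ioi (0:ℝ) := by
    ext x
    simp only [mem_iUnion, hs, mem_Ioi]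
    constructor
    · rintro ⟨n, hn⟩; exact lt_trans (hpos n) hn
    · intro hx
      obtain ⟨n, hn⟩ := exists_nat_gt x⁻¹
      refine ⟨n, ?_⟩
      rw [inv_lt_comm₀ (by positivity) hx]
      exact hn.trans (by linarith)
  have hmono : Monotone s := by
    intro m n hmn
    apply Ioi_subset_Ioi
    have h1 : (m:ℝ) ≤ n := Nat.cast_le.mpr hmn
    have h2 : (0:ℝ) < (m:ℝ)+1 := by positivity
    exact one_div ((n:ℝ)+1) ▸ one_div ((m:ℝ)+1) ▸ one_div_le_one_div_of_le h2 (by linarith)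
  have h1 : Tendsto (fun n : ℕ => ∫ x in s n, f' x) atTop (𝓝 (∫ x in Ioi (0:ℝ), f' x)) := by
    have := tendsto_setIntegral_of_monotone (f := f') (μ := volume) (s := s)
      (fun n => measurableSet_Ioi) hmono (by rw [hunion]; exact hint)
    rwa [hunion] at this
  have h2 : ∀ n : ℕ, ∫ x in s n, f' x = b - f (((n:ℝ)+1)⁻¹) := by
    intro n
    apply integral_Ioi_of_hasDerivAt_of_tendsto
    · exact (hderiv _ (hpos n)).continuousAt.continuousWithinAt
    · intro x hx; exact hderiv x (lt_trans (hpos n) hx)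
    · exact hint.mono (Ioi_subset_Ioi (hpos n).le) le_rfl
    · exact htop
  have h3 : Tendsto (fun n : ℕ => b - f (((n:ℝ)+1)⁻¹)) atTop (𝓝 (b - a)) := by
    apply Tendsto.const_sub
    apply h0.comp
    rw [tendsto_nhdsWithin_iff]
    constructor
    · have : Tendsto (fun n : ℕ => ((n:ℝ)+1)⁻¹) atTop (𝓝 0) :=
        tendsto_one_div_add_atTop_nhds_zero_nat.congr (fun n => by rw [one_div])
      exact this
    · exact Eventually.of_forall fun n => hpos n
  have := h1.congr h2
  exact tendsto_nhds_unique this h3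

lemma fubini_frag {F : ℝ × ℝ → ℝ}
    (hF : IntegrableOn F {p : ℝ × ℝ | 0 < p.1 ∧ p.1 < p.2}) :
    IntegrableOn (fun x => ∫ y in Ioi x, F (x, y)) (Ioi 0) ∧
    (∫ x in Ioi (0:ℝ), ∫ y in Ioi x, F (x, y))
      = ∫ y in Ioi (0:ℝ), ∫ x in Ioo 0 y, F (x, y) := by
  set S : Set (ℝ × ℝ) := {p : ℝ × ℝ | 0 < p.1 ∧ p.1 < p.2} with hS
  have hSmeas : MeasurableSet S :=
    ((isOpen_lt continuous_const continuous_fst).inter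
      (isOpen_lt continuous_fst continuous_snd)).measurableSet
  have hind : Integrable (S.indicator F) (volume : Measure (ℝ × ℝ)) :=
    (integrable_indicator_iff hSmeas).2 hF
  rw [MeasureTheory.Measure.volume_eq_prod] at hind
  -- marginal in x
  have hmarg : Integrable (fun x => ∫ y, S.indicator F (x, y)) (volume : Measure ℝ) :=
    hind.integral_prod_left
  have hptx : ∀ x, 0 < x → (∫ y, S.indicator F (x, y)) = ∫ y in Ioi x, F (x, y) := by
    intro x hx
    rw [← integral_indicator measurableSet_Ioi]
    apply integral_congr_ae
    filter_upwards with y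
    by_cases h : x < y
    · simp [S, indicator, hx, h]
    · simp [S, indicator, h, hx]
  have hpty : ∀ y, (∫ x, S.indicator F (x, y)) = ∫ x in Ioo 0 y, F (x, y) := by
    intro y
    rw [← integral_indicator measurableSet_Ioo]
    apply integral_congr_ae
    filter_upwards with x
    by_cases h1 : 0 < x
    · by_cases h2 : x < y
      all_goals simp [S, indicator, h1, h2, mem_Ioo]
    · simp [S, indicator, h1, mem_Ioo]
  constructor
  · exact (hmarg.integrableOn).congr_fun (fun x hx => hptx x hx) measurableSet_Ioi
  · have e1 : (∫ x in Ioi (0:ℝ), ∫ y in Ioi x, F (x, y))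
        = ∫ x in Ioi (0:ℝ), ∫ y, S.indicator F (x, y) :=
      setIntegral_congr_fun measurableSet_Ioi (fun x hx => (hptx x hx).symm)
    have e2 : (∫ x in Ioi (0:ℝ), ∫ y, S.indicator F (x, y))
        = ∫ x, ∫ y, S.indicator F (x, y) := by
      rw [← integral_indicator measurableSet_Ioi]
      congr 1
      ext x
      by_cases h1 : 0 < x
      · simp [indicator, h1]
      · have hz : ∀ y, S.indicator F (x, y) = 0 := by
          intro y; simp [S, indicator]; intro h; exact absurd h h1
        rw [indicator_of_notMem (by simpa using h1),
          show (fun y => S.indicator F (x, y)) = fun _ => 0 from funext hz, integral_zero]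
    have e3 : (∫ x, ∫ y, S.indicator F (x, y)) = ∫ y, ∫ x, S.indicator F (x, y) := by
      rw [← integral_prod _ hind, integral_prod_symm _ hind]
    have e4 : (∫ y, ∫ x, S.indicator F (x, y))
        = ∫ y in Ioi (0:ℝ), ∫ x in Ioo 0 y, F (x, y) := by
      rw [← integral_indicator measurableSet_Ioi]
      congr 1
      ext y
      by_cases h1 : 0 < y
      · simp only [indicator_of_mem (mem_Ioi.2 h1)]
        exact hpty y
      · have hempty : Ioo (0:ℝ) y = ∅ := Ioo_eq_empty (by intro h; exact h1 (lt_trans h (by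
          exfalso; exact h1 (by linarith))))
        have hz : ∀ x, S.indicator F (x, y) = 0 := by
          intro x
          simp only [S, indicator, mem_setOf_eq]
          split_ifs with h
          · exact absurd (lt_trans h.1 h.2) h1
          · rfl
        rw [indicator_of_notMem (by simpa using h1),
          show (fun x => S.indicator F (x, y)) = fun _ => 0 from funext hz, integral_zero]
    rw [e1, e2, e3, e4]

/-- A *decaying eigenfunction* `U` (with `U'` the pointwise derivative of `τ U`) with
eigenvalue `Λ` for the parameter `V` of the prion growth-fragmentation operator:
`U ≥ 0`, `τ U` is differentiable on `(0,∞)` with derivative `U'`, the eigenvalue equation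
`V (τU)'(x) + (μ(x)+β(x)) U(x) − 2 ∫ₓ^∞ β(y) κ(x,y) U(y) dy = Λ U(x)` holds for `x > 0`,
the functions `U, xU, τU, μU, xμU, βU, xβU, (τU)'` are integrable on `(0,∞)`,
`β(y)κ(x,y)U(y)` and `x β(y)κ(x,y)U(y)` are integrable on `{0 < x < y}`, and
`τU → 0` at `0⁺`, `τU → 0` and `x τU → 0` at `∞`. -/
structure DecayingEigenfunction (V Lam : ℝ) (tau mu beta : ℝ → ℝ)
    (kappa : ℝ → ℝ → ℝ) (U U' : ℝ → ℝ) : Prop where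
  nonneg : ∀ x > 0, 0 ≤ U x
  hasDeriv : ∀ x > 0, HasDerivAt (fun y => tau y * U y) (U' x) x
  eigen : ∀ x > 0,
    V * U' x + (mu x + beta x) * U x - 2 * ∫ y in Ioi x, beta y * kappa x y * U y
      = Lam * U x
  int_U : IntegrableOn U (Ioi 0)
  int_xU : IntegrableOn (fun x => x * U x) (Ioi 0)
  int_tauU : IntegrableOn (fun x => tau x * U x) (Ioi 0)
  int_muU : IntegrableOn (fun x => mu x * U x) (Ioi 0)
  int_xmuU : IntegrableOn (fun x => x * mu x * U x) (Ioi 0)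
  int_betaU : IntegrableOn (fun x => beta x * U x) (Ioi 0)
  int_xbetaU : IntegrableOn (fun x => x * beta x * U x) (Ioi 0)
  int_U' : IntegrableOn U' (Ioi 0)
  int_frag : IntegrableOn (fun p : ℝ × ℝ => beta p.2 * kappa p.1 p.2 * U p.2)
      {p : ℝ × ℝ | 0 < p.1 ∧ p.1 < p.2}
  int_xfrag : IntegrableOn (fun p : ℝ × ℝ => p.1 * (beta p.2 * kappa p.1 p.2 * U p.2))
      {p : ℝ × ℝ | 0 < p.1 ∧ p.1 < p.2}
  lim_zero : Tendsto (fun x => tau x * U x) (nhdsWithin 0 (Ioi 0)) (nhds 0)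
  lim_top : Tendsto (fun x => tau x * U x) atTop (nhds 0)
  lim_xtop : Tendsto (fun x => x * (tau x * U x)) atTop (nhds 0)

/-- **Explicit eigenvalue in the constant-coefficients case**: with `τ ≡ τ₀`, `μ ≡ μ₀`,
`β(x) = β₀ x` and `V > 0`, any decaying eigenfunction with positive mass has mean size
`(∫ x U)/(∫ U) = √(τ₀ V / β₀)` and eigenvalue `Λ = μ₀ − √(τ₀ β₀ V)`. -/
theorem constant_coefficients_eigenvalue
    (V Lam tau0 beta0 mu0 : ℝ)
    (hV : 0 < V) (htau0 : 0 < tau0) (hbeta0 : 0 < beta0)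
    (kappa : ℝ → ℝ → ℝ) (U U' : ℝ → ℝ)
    (hkap_nn : ∀ x y : ℝ, 0 ≤ kappa x y)
    (hkap_supp : ∀ x y : ℝ, y ≤ x → kappa x y = 0)
    (hkap_mass : ∀ y > 0, ∫ x in (0:ℝ)..y, kappa x y = 1)
    (hkap_mom : ∀ y > 0, ∫ x in (0:ℝ)..y, x * kappa x y = y / 2)
    (hU : DecayingEigenfunction V Lam (fun _ => tau0) (fun _ => mu0)
        (fun x => beta0 * x) kappa U U')
    (hpos : 0 < ∫ x in Ioi (0:ℝ), U x) :
    (∫ x in Ioi (0:ℝ), x * U x) / (∫ x in Ioi (0:ℝ), U x)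
        = Real.sqrt (tau0 * V / beta0) ∧
    Lam = mu0 - Real.sqrt (tau0 * beta0 * V) := by
  set M0 : ℝ := ∫ x in Ioi (0:ℝ), U x with hM0
  set M1 : ℝ := ∫ x in Ioi (0:ℝ), x * U x with hM1
  set B2 : ℝ := ∫ x in Ioi (0:ℝ), x * (beta0 * x) * U x with hB2
  set I : ℝ → ℝ := fun x => ∫ y in Ioi x, beta0 * y * kappa x y * U y with hI
  -- Fubini for the fragmentation term
  have hfub1 := fubini_frag (F := fun p : ℝ × ℝ => beta0 * p.2 * kappa p.1 p.2 * U p.2)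
    hU.int_frag
  have hfub2 := fubini_frag
    (F := fun p : ℝ × ℝ => p.1 * (beta0 * p.2 * kappa p.1 p.2 * U p.2)) hU.int_xfrag
  have hI_int : IntegrableOn I (Ioi 0) := hfub1.1
  have hxI_int : IntegrableOn (fun x => x * I x) (Ioi 0) := by
    refine hfub2.1.congr_fun (fun x _ => ?_) measurableSet_Ioi
    exact (integral_const_mul x _)
  -- inner integrals via the kernel moment conditions
  have hIoo_mass : ∀ y : ℝ, 0 < y → (∫ x in Ioo (0:ℝ) y, kappa x y) = 1 := by
    intro y hy
    have := hkap_mass y hy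
    rwa [intervalIntegral.integral_of_le hy.le, integral_Ioc_eq_integral_Ioo] at this
  have hIoo_mom : ∀ y : ℝ, 0 < y → (∫ x in Ioo (0:ℝ) y, x * kappa x y) = y / 2 := by
    intro y hy
    have := hkap_mom y hy
    rwa [intervalIntegral.integral_of_le hy.le, integral_Ioc_eq_integral_Ioo] at this
  -- value of ∫ I
  have hC : ∫ x in Ioi (0:ℝ), I x = beta0 * M1 := by
    have e1 : ∫ x in Ioi (0:ℝ), I x
        = ∫ y in Ioi (0:ℝ), ∫ x in Ioo 0 y, beta0 * y * kappa x y * U y := hfub1.2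
    rw [e1]
    have e2 : ∀ y ∈ Ioi (0:ℝ),
        (∫ x in Ioo (0:ℝ) y, beta0 * y * kappa x y * U y) = beta0 * (y * U y) := by
      intro y hy
      have : (fun x => beta0 * y * kappa x y * U y)
          = fun x => (beta0 * (y * U y)) * kappa x y := funext fun x => by ring
      rw [this, integral_const_mul, hIoo_mass y hy, mul_one]
    rw [setIntegral_congr_fun measurableSet_Ioi e2, integral_const_mul]
  -- value of ∫ x * I x
  have hD : ∫ x in Ioi (0:ℝ), x * I x = B2 / 2 := by
    have e1 : ∫ x in Ioi (0:ℝ), x * I x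
        = ∫ x in Ioi (0:ℝ), ∫ y in Ioi x, x * (beta0 * y * kappa x y * U y) := by
      refine setIntegral_congr_fun measurableSet_Ioi (fun x _ => ?_)
      exact (integral_const_mul x _).symm
    rw [e1, hfub2.2]
    have e2 : ∀ y ∈ Ioi (0:ℝ),
        (∫ x in Ioo (0:ℝ) y, x * (beta0 * y * kappa x y * U y))
          = (y * (beta0 * y) * U y) / 2 := by
      intro y hy
      have : (fun x => x * (beta0 * y * kappa x y * U y))
          = fun x => (beta0 * (y * U y)) * (x * kappa x y) := funext fun x => by ring
      rw [this, integral_const_mul, hIoo_mom y hy]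
      ring
    rw [setIntegral_congr_fun measurableSet_Ioi e2, integral_div]
  -- the eigen equation, beta-reduced
  have heig : ∀ x : ℝ, 0 < x →
      V * U' x + (mu0 + beta0 * x) * U x - 2 * I x = Lam * U x :=
    fun x hx => hU.eigen x hx
  -- FTC: ∫ U' = 0
  have hderiv : ∀ x ∈ Ioi (0:ℝ), HasDerivAt (fun y => tau0 * U y) (U' x) x :=
    fun x hx => hU.hasDeriv x hx
  have hA : ∫ x in Ioi (0:ℝ), U' x = 0 := by
    have := ftc_Ioi hderiv hU.int_U' hU.lim_zero hU.lim_top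
    simpa using this
  -- integrability of x * U' x
  have hxU'_int : IntegrableOn (fun x => x * U' x) (Ioi 0) := by
    have hG : IntegrableOn (fun x =>
        (Lam * (x * U x) - mu0 * (x * U x) - x * (beta0 * x) * U x + 2 * (x * I x)) / V)
        (Ioi 0) := by
      apply Integrable.div_const
      apply Integrable.add
      · apply Integrable.sub
        · exact (hU.int_xU.const_mul Lam).sub (hU.int_xU.const_mul mu0)
        · exact hU.int_xbetaU
      · exact hxI_int.const_mul 2
    refine hG.congr_fun (fun x hx => ?_) measurableSet_Ioi
    have he := heig x hx
    rw [div_eq_iff (ne_of_gt hV)]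
    linear_combination (-x) * he
  -- FTC with weight: ∫ (tau0 * U + x * U') = 0
  have hB : ∫ x in Ioi (0:ℝ), (tau0 * U x + x * U' x) = 0 := by
    have hd : ∀ x ∈ Ioi (0:ℝ),
        HasDerivAt (fun y => y * (tau0 * U y)) (tau0 * U x + x * U' x) x := by
      intro x hx
      have := (hasDerivAt_id x).mul (hderiv x hx)
      convert this using 1
      all_goals first | rfl | (funext y; simp) | simp
    have h0 : Tendsto (fun x => x * (tau0 * U x)) (𝓝[>] (0:ℝ)) (𝓝 0) := by
      have h1 : Tendsto (fun x : ℝ => x) (𝓝[>] (0:ℝ)) (𝓝 0) :=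
        tendsto_id.mono_left nhdsWithin_le_nhds
      have := h1.mul (α := ℝ) (hU.lim_zero)
      simpa using this
    have htop : Tendsto (fun x => x * (tau0 * U x)) atTop (𝓝 0) := hU.lim_xtop
    have := ftc_Ioi hd (hU.int_tauU.add hxU'_int) h0 htop
    simpa using this
  have hxU'_val : ∫ x in Ioi (0:ℝ), x * U' x = -(tau0 * M0) := by
    have hsplit : ∫ x in Ioi (0:ℝ), (tau0 * U x + x * U' x)
        = (∫ x in Ioi (0:ℝ), tau0 * U x) + ∫ x in Ioi (0:ℝ), x * U' x :=
      integral_add hU.int_tauU hxU'_int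
    have htau : ∫ x in Ioi (0:ℝ), tau0 * U x = tau0 * M0 := integral_const_mul tau0 U
    rw [hsplit, htau] at hB
    linarith
  -- integrate the eigen equation (E1)
  have hintU' : IntegrableOn (fun x => V * U' x) (Ioi 0) := hU.int_U'.const_mul V
  have hmuU_int : IntegrableOn (fun x => mu0 * U x) (Ioi 0) := hU.int_muU
  have hbetaU_int : IntegrableOn (fun x => beta0 * x * U x) (Ioi 0) := hU.int_betaU
  have hE1 : mu0 * M0 + beta0 * M1 - 2 * (beta0 * M1) = Lam * M0 := by
    have lhs_eq : ∫ x in Ioi (0:ℝ),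
        (V * U' x + (mu0 * U x + beta0 * x * U x) - 2 * I x) = Lam * M0 := by
      have : ∀ x ∈ Ioi (0:ℝ),
          V * U' x + (mu0 * U x + beta0 * x * U x) - 2 * I x = Lam * U x := by
        intro x hx
        linear_combination heig x hx
      rw [setIntegral_congr_fun measurableSet_Ioi this, integral_const_mul]
    have split : ∫ x in Ioi (0:ℝ),
        (V * U' x + (mu0 * U x + beta0 * x * U x) - 2 * I x)
        = (V * ∫ x in Ioi (0:ℝ), U' x)
          + ((∫ x in Ioi (0:ℝ), mu0 * U x) + ∫ x in Ioi (0:ℝ), beta0 * x * U x)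
          - 2 * ∫ x in Ioi (0:ℝ), I x := by
      have hsum1 : IntegrableOn (fun x => mu0 * U x + beta0 * x * U x) (Ioi 0) :=
        hmuU_int.add hbetaU_int
      have hsum2 : IntegrableOn
          (fun x => V * U' x + (mu0 * U x + beta0 * x * U x)) (Ioi 0) :=
        hintU'.add hsum1
      rw [integral_sub hsum2 (hI_int.const_mul 2),
        integral_add hintU' hsum1,
        integral_add hmuU_int hbetaU_int, integral_const_mul, integral_const_mul,
        integral_const_mul]
    have hmu : ∫ x in Ioi (0:ℝ), mu0 * U x = mu0 * M0 := integral_const_mul mu0 U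
    have hbeta : ∫ x in Ioi (0:ℝ), beta0 * x * U x = beta0 * M1 := by
      have : (fun x => beta0 * x * U x) = fun x => beta0 * (x * U x) :=
        funext fun x => by ring
      rw [this, integral_const_mul]
    rw [split, hA, hmu, hbeta, hC] at lhs_eq
    linarith [lhs_eq]
  -- integrate x × eigen equation (E2)
  have hE2 : V * (-(tau0 * M0)) + (mu0 * M1 + B2) - 2 * (B2 / 2) = Lam * M1 := by
    have lhs_eq : ∫ x in Ioi (0:ℝ),
        (V * (x * U' x) + (mu0 * (x * U x) + x * (beta0 * x) * U x) - 2 * (x * I x))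
        = Lam * M1 := by
      have : ∀ x ∈ Ioi (0:ℝ),
          V * (x * U' x) + (mu0 * (x * U x) + x * (beta0 * x) * U x) - 2 * (x * I x)
            = Lam * (x * U x) := by
        intro x hx
        linear_combination x * heig x hx
      rw [setIntegral_congr_fun measurableSet_Ioi this, integral_const_mul]
    have hVxU' : IntegrableOn (fun x => V * (x * U' x)) (Ioi 0) := hxU'_int.const_mul V
    have hmuxU : IntegrableOn (fun x => mu0 * (x * U x)) (Ioi 0) := hU.int_xU.const_mul mu0
    have hxbU : IntegrableOn (fun x => x * (beta0 * x) * U x) (Ioi 0) := hU.int_xbetaU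
    have split : ∫ x in Ioi (0:ℝ),
        (V * (x * U' x) + (mu0 * (x * U x) + x * (beta0 * x) * U x) - 2 * (x * I x))
        = (V * ∫ x in Ioi (0:ℝ), x * U' x)
          + ((∫ x in Ioi (0:ℝ), mu0 * (x * U x)) + ∫ x in Ioi (0:ℝ), x * (beta0 * x) * U x)
          - 2 * ∫ x in Ioi (0:ℝ), x * I x := by
      have hsum1 : IntegrableOn (fun x => mu0 * (x * U x) + x * (beta0 * x) * U x) (Ioi 0) :=
        hmuxU.add hxbU
      have hsum2 : IntegrableOn
          (fun x => V * (x * U' x) + (mu0 * (x * U x) + x * (beta0 * x) * U x)) (Ioi 0) :=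
        hVxU'.add hsum1
      rw [integral_sub hsum2 (hxI_int.const_mul 2),
        integral_add hVxU' hsum1,
        integral_add hmuxU hxbU, integral_const_mul, integral_const_mul,
        integral_const_mul]
    have hmu : ∫ x in Ioi (0:ℝ), mu0 * (x * U x) = mu0 * M1 := integral_const_mul mu0 _
    rw [split, hxU'_val, hmu, hD] at lhs_eq
    exact lhs_eq
  -- algebra
  have hM1nn : 0 ≤ M1 :=
    setIntegral_nonneg measurableSet_Ioi fun x hx =>
      mul_nonneg (le_of_lt hx) (hU.nonneg x hx)
  have key : beta0 * M1 ^ 2 = tau0 * V * M0 ^ 2 := by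
    linear_combination (-M1) * hE1 + M0 * hE2
  have hM1sq : M1 ^ 2 = (tau0 * V / beta0) * M0 ^ 2 := by
    field_simp
    linear_combination key
  have hratio_nn : 0 ≤ tau0 * V / beta0 := by positivity
  have hM1val : M1 = Real.sqrt (tau0 * V / beta0) * M0 := by
    have h1 : M1 = Real.sqrt (M1 ^ 2) := (Real.sqrt_sq hM1nn).symm
    rw [h1, hM1sq, Real.sqrt_mul hratio_nn, Real.sqrt_sq hpos.le]
  have hM0ne : M0 ≠ 0 := ne_of_gt hpos
  constructor
  · rw [hM1val]
    field_simp
  · have hsq : beta0 * Real.sqrt (tau0 * V / beta0) = Real.sqrt (tau0 * beta0 * V) := by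
      have h1 : tau0 * beta0 * V = beta0 ^ 2 * (tau0 * V / beta0) := by
        field_simp
      rw [h1, Real.sqrt_mul (sq_nonneg beta0), Real.sqrt_sq hbeta0.le]
    have hLam : Lam * M0 = (mu0 - Real.sqrt (tau0 * beta0 * V)) * M0 := by
      rw [← hE1, hM1val, ← hsq]
      ring
    exact mul_right_cancel₀ hM0ne hLam
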